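/- arXiv:1501.02415 — 2 statements merged into one kernel-verified Lean document; each statement's English description precedes it below -/
import Mathlib

section
/- Let p, q, α > 1 with 1/p + 1/q = 1, and let β, β̄ > 1 satisfy β > pα + 1, β̄ > qα + 1 and pα ≥ 2, qα ≥ 2. Suppose ξ has the folded t density f(x) = (2Γ(β/2)/(Γ((β−1)/2)√((β−1)π))) (1 + x²/(β−1))^{−β/2} for x > 0, ξ̄ has the folded t density with parameter β̄, and ξ, ξ̄ are independent. Then E[ξ²] < ∞, E[ξ̄²] < ∞, and sup_{t≥0} t^α P(ξ ξ̄ > t) < ∞. -/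
open MeasureTheory ProbabilityTheory
open Set

lemma measurable_rpow_const' (r : ℝ) : Measurable fun x : ℝ => x ^ r := by
  measurability

lemma foldedT_integrableOn (β r : ℝ) (hβ : 1 < β) (hr : 0 ≤ r) (hrβ : r < β - 1) :
    IntegrableOn (fun x : ℝ => x ^ r * (1 + x ^ 2 / (β - 1)) ^ (-(β / 2))) (Ioi 0) := by
  have hβ0 : (0:ℝ) < β - 1 := by linarith
  have hmeas : Measurable fun x : ℝ => x ^ r * (1 + x ^ 2 / (β - 1)) ^ (-(β / 2)) := by
    measurability
  have h1 : IntegrableOn (fun x : ℝ => x ^ r * (1 + x ^ 2 / (β - 1)) ^ (-(β / 2))) (Ioc 0 1) := by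
    refine Integrable.mono' (g := fun _ => (1:ℝ)) (integrableOn_const measure_Ioc_lt_top.ne)
      hmeas.aestronglyMeasurable ?_
    filter_upwards [ae_restrict_mem measurableSet_Ioc] with x hx
    have hx0 : 0 < x := hx.1
    have hb : (1:ℝ) ≤ 1 + x ^ 2 / (β - 1) := le_add_of_nonneg_right (by positivity)
    have h2 : (1 + x ^ 2 / (β - 1)) ^ (-(β / 2)) ≤ 1 :=
      Real.rpow_le_one_of_one_le_of_nonpos hb (by linarith)
    have h3 : x ^ r ≤ 1 := Real.rpow_le_one hx0.le hx.2 hr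
    rw [Real.norm_eq_abs, abs_of_nonneg (by positivity)]
    calc x ^ r * (1 + x ^ 2 / (β - 1)) ^ (-(β / 2)) ≤ 1 * 1 := by
          apply mul_le_mul h3 h2 (by positivity) zero_le_one
      _ = 1 := by ring
  have h2 : IntegrableOn (fun x : ℝ => x ^ r * (1 + x ^ 2 / (β - 1)) ^ (-(β / 2))) (Ioi 1) := by
    refine Integrable.mono' (((integrableOn_Ioi_rpow_of_lt (a := r - β) (by linarith)
      one_pos).const_mul ((β - 1) ^ (β / 2)))) hmeas.aestronglyMeasurable ?_
    filter_upwards [ae_restrict_mem measurableSet_Ioi] with x hx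
    have hx0 : (0:ℝ) < x := lt_trans one_pos hx
    rw [Real.norm_eq_abs, abs_of_nonneg (by positivity)]
    have key : (1 + x ^ 2 / (β - 1)) ^ (-(β / 2)) ≤ (x ^ 2 / (β - 1)) ^ (-(β / 2)) := by
      apply Real.rpow_le_rpow_of_nonpos (by positivity) (by linarith) (by linarith)
    have heq : (x ^ 2 / (β - 1)) ^ (-(β / 2)) = (β - 1) ^ (β / 2) * x ^ (-β) := by
      rw [Real.div_rpow (by positivity) hβ0.le, ← Real.rpow_natCast x 2,
        ← Real.rpow_mul hx0.le, Real.rpow_neg hβ0.le, div_eq_mul_inv, inv_inv,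
        show ((2:ℕ):ℝ) * -(β/2) = -β by push_cast; ring, mul_comm]
    calc x ^ r * (1 + x ^ 2 / (β - 1)) ^ (-(β / 2))
        ≤ x ^ r * ((β - 1) ^ (β / 2) * x ^ (-β)) := by
          rw [← heq]; exact mul_le_mul_of_nonneg_left key (by positivity)
      _ = (β - 1) ^ (β / 2) * x ^ (r - β) := by
          rw [show r - β = r + -β by ring, Real.rpow_add hx0]; ring
  have : Ioi (0:ℝ) = Ioc 0 1 ∪ Ioi 1 := (Ioc_union_Ioi_eq_Ioi zero_le_one).symm
  rw [this]
  exact h1.union h2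
lemma foldedT_moment {Ω : Type*} [MeasurableSpace Ω] (μ : Measure Ω) (β r : ℝ)
    (hβ : 1 < β) (hr : 0 ≤ r) (hrβ : r < β - 1) (ξ : Ω → ℝ) (hmξ : Measurable ξ)
    (hlaw : μ.map ξ = volume.withDensity fun x : ℝ =>
      ENNReal.ofReal
        (if 0 < x then
          2 * Real.Gamma (β / 2) /
              (Real.Gamma ((β - 1) / 2) * Real.sqrt ((β - 1) * Real.pi)) *
            (1 + x ^ 2 / (β - 1)) ^ (-(β / 2))
        else 0)) :
    Integrable (fun ω => |ξ ω| ^ r) μ := by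
  have hβ0 : (0:ℝ) < β - 1 := by linarith
  set c := 2 * Real.Gamma (β / 2) /
      (Real.Gamma ((β - 1) / 2) * Real.sqrt ((β - 1) * Real.pi)) with hc
  have hcpos : 0 < c := by
    apply div_pos
    · have := Real.Gamma_pos_of_pos (show (0:ℝ) < β / 2 by linarith)
      linarith
    · exact mul_pos (Real.Gamma_pos_of_pos (show (0:ℝ) < (β - 1) / 2 by linarith))
        (Real.sqrt_pos.mpr (by positivity))
  have hdm : Measurable fun x : ℝ =>
      (if 0 < x then c * (1 + x ^ 2 / (β - 1)) ^ (-(β / 2)) else 0) := by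
    have hbase : Measurable fun x : ℝ => 1 + x ^ 2 / (β - 1) := by measurability
    exact Measurable.ite measurableSet_Ioi
      (((measurable_rpow_const' (-(β / 2))).comp hbase).const_mul c) measurable_const
  have key : Integrable (fun x : ℝ => |x| ^ r) (μ.map ξ) := by
    rw [hlaw, integrable_withDensity_iff hdm.ennreal_ofReal
      (Filter.Eventually.of_forall fun x => ENNReal.ofReal_lt_top)]
    rw [← integrableOn_univ, ← Set.Iic_union_Ioi (a := (0:ℝ)), integrableOn_union]
    constructor
    · refine IntegrableOn.congr_fun (integrableOn_zero) ?_ measurableSet_Iic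
      intro x hx
      simp [not_lt.mpr (Set.mem_Iic.mp hx)]
    · refine IntegrableOn.congr_fun
        ((foldedT_integrableOn β r hβ hr hrβ).const_mul c) ?_ measurableSet_Ioi
      intro x hx
      have hx0 : 0 < x := hx
      dsimp only
      rw [if_pos hx0, ENNReal.toReal_ofReal (by positivity), abs_of_pos hx0]
      ring
  have := (integrable_map_measure (f := ξ) (g := fun x => |x| ^ r)
    ((measurable_rpow_const' r).comp measurable_abs).aestronglyMeasurable
    hmξ.aemeasurable).mp key
  exact this


/-- **Folded t example.**  If `ξ ~ Ft(β)` and `ξ̄ ~ Ft(β̄)` are independent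
folded-t random variables with `β > pα + 1`, `β̄ > qα + 1`, `pα, qα ≥ 2`,
`1/p + 1/q = 1` and `p, q, α > 1`, then `E[ξ²] < ∞`, `E[ξ̄²] < ∞` and
`sup_{t≥0} t^α P(ξ ξ̄ > t) < ∞`. -/
theorem folded_t_product_tail_bound
    {Ω : Type*} [MeasurableSpace Ω] (μ : Measure Ω) [IsProbabilityMeasure μ]
    (p q α β βb : ℝ)
    (hp : 1 < p) (hq : 1 < q) (hα : 1 < α) (hpq : 1 / p + 1 / q = 1)
    (hβ1 : 1 < β) (hβb1 : 1 < βb)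
    (hβ : p * α + 1 < β) (hβb : q * α + 1 < βb)
    (hpα : 2 ≤ p * α) (hqα : 2 ≤ q * α)
    (ξ ξb : Ω → ℝ) (hmξ : Measurable ξ) (hmξb : Measurable ξb)
    (hlaw : μ.map ξ = volume.withDensity fun x : ℝ =>
      ENNReal.ofReal
        (if 0 < x then
          2 * Real.Gamma (β / 2) /
              (Real.Gamma ((β - 1) / 2) * Real.sqrt ((β - 1) * Real.pi)) *
            (1 + x ^ 2 / (β - 1)) ^ (-(β / 2))
        else 0))
    (hlawb : μ.map ξb = volume.withDensity fun x : ℝ =>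
      ENNReal.ofReal
        (if 0 < x then
          2 * Real.Gamma (βb / 2) /
              (Real.Gamma ((βb - 1) / 2) * Real.sqrt ((βb - 1) * Real.pi)) *
            (1 + x ^ 2 / (βb - 1)) ^ (-(βb / 2))
        else 0))
    (hindep : IndepFun ξ ξb μ) :
    Integrable (fun ω => (ξ ω) ^ 2) μ ∧ Integrable (fun ω => (ξb ω) ^ 2) μ ∧
      ∃ M : ℝ, ∀ t : ℝ, 0 ≤ t → t ^ α * (μ {ω | t < ξ ω * ξb ω}).toReal ≤ M := by
  have hα0 : (0:ℝ) < α := by linarith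
  have hαβ : α < β - 1 := by nlinarith
  have hαβb : α < βb - 1 := by nlinarith
  have h2β : (2:ℝ) < β - 1 := by linarith
  have h2βb : (2:ℝ) < βb - 1 := by linarith
  -- second moments
  have hsq : Integrable (fun ω => (ξ ω) ^ 2) μ := by
    refine (foldedT_moment μ β 2 hβ1 (by norm_num) h2β ξ hmξ hlaw).congr
      (Filter.Eventually.of_forall fun ω => ?_)
    dsimp only
    rw [show (2:ℝ) = ((2:ℕ):ℝ) by norm_num, Real.rpow_natCast, sq_abs]
  have hsqb : Integrable (fun ω => (ξb ω) ^ 2) μ := by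
    refine (foldedT_moment μ βb 2 hβb1 (by norm_num) h2βb ξb hmξb hlawb).congr
      (Filter.Eventually.of_forall fun ω => ?_)
    dsimp only
    rw [show (2:ℝ) = ((2:ℕ):ℝ) by norm_num, Real.rpow_natCast, sq_abs]
  refine ⟨hsq, hsqb, ?_⟩
  -- α-moments
  have hIξ : Integrable (fun ω => |ξ ω| ^ α) μ :=
    foldedT_moment μ β α hβ1 hα0.le hαβ ξ hmξ hlaw
  have hIξb : Integrable (fun ω => |ξb ω| ^ α) μ :=
    foldedT_moment μ βb α hβb1 hα0.le hαβb ξb hmξb hlawb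
  have hmabs : Measurable fun x : ℝ => |x| ^ α :=
    (measurable_rpow_const' α).comp measurable_abs
  have hind2 : IndepFun (fun ω => |ξ ω| ^ α) (fun ω => |ξb ω| ^ α) μ :=
    hindep.comp hmabs hmabs
  have hInt : Integrable (fun ω => |ξ ω| ^ α * |ξb ω| ^ α) μ :=
    hind2.integrable_mul hIξ hIξb
  set I := ∫ ω, |ξ ω| ^ α * |ξb ω| ^ α ∂μ with hI
  have hI0 : 0 ≤ I := integral_nonneg fun ω => by positivity
  refine ⟨I, fun t ht => ?_⟩
  have hlin : ∫⁻ ω, ENNReal.ofReal (|ξ ω| ^ α * |ξb ω| ^ α) ∂μ = ENNReal.ofReal I :=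
    (ofReal_integral_eq_lintegral_ofReal hInt
      (Filter.Eventually.of_forall fun ω => by positivity)).symm
  have haem : AEMeasurable (fun ω => ENNReal.ofReal (|ξ ω| ^ α * |ξb ω| ^ α)) μ :=
    (((hmabs.comp hmξ).mul (hmabs.comp hmξb)).ennreal_ofReal).aemeasurable
  have hsub : {ω | t < ξ ω * ξb ω} ⊆
      {ω | ENNReal.ofReal (t ^ α) ≤ ENNReal.ofReal (|ξ ω| ^ α * |ξb ω| ^ α)} := by
    intro ω hω
    have h1 : t ≤ |ξ ω * ξb ω| := le_trans (le_of_lt hω) (le_abs_self _)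
    have h2 : t ^ α ≤ |ξ ω * ξb ω| ^ α := Real.rpow_le_rpow ht h1 hα0.le
    rw [abs_mul, Real.mul_rpow (abs_nonneg _) (abs_nonneg _)] at h2
    exact ENNReal.ofReal_le_ofReal h2
  have hmain : ENNReal.ofReal (t ^ α) * μ {ω | t < ξ ω * ξb ω} ≤ ENNReal.ofReal I := by
    calc ENNReal.ofReal (t ^ α) * μ {ω | t < ξ ω * ξb ω}
        ≤ ENNReal.ofReal (t ^ α) *
          μ {ω | ENNReal.ofReal (t ^ α) ≤ ENNReal.ofReal (|ξ ω| ^ α * |ξb ω| ^ α)} :=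
          mul_le_mul_right (measure_mono hsub) _
      _ ≤ ∫⁻ ω, ENNReal.ofReal (|ξ ω| ^ α * |ξb ω| ^ α) ∂μ :=
          mul_meas_ge_le_lintegral₀ haem _
      _ = ENNReal.ofReal I := hlin
  have hfin := ENNReal.toReal_mono ENNReal.ofReal_ne_top hmain
  rwa [ENNReal.toReal_mul, ENNReal.toReal_ofReal (Real.rpow_nonneg ht α),
    ENNReal.toReal_ofReal hI0] at hfin
end

section
/- Let {ξ_l}_{l∈ℤ} be i.i.d. random variables with E[ξ₁] = 0 and E[ξ₁²] = 1. Let σ ∈ (1/2, 1), set c_0 = 1 and c_l = |l|^{−σ} for l ≠ 0, take T = T(n) = n and define S_n^{(3)} = Σ_{k=1}^n Σ_{l≠m, l−k > T, m−k > T} c_{k−l} c_{k−m} ξ_l ξ_m. Then there is a constant C = C(σ) such that for all n ≥ 1, E[(S_n^{(3)})²] ≤ C n² T^{2−4σ} = C n^{4−4σ}. -/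
open MeasureTheory ProbabilityTheory Filter
open scoped Topology

/-- Tail sum bound: `∑_{j=n+1}^{M} j^{-2σ} ≤ n^{1-2σ}/(2σ-1)` for `2σ > 1`, `n ≥ 1`. -/
lemma tail_sum_bound (σ : ℝ) (hσ : 1 / 2 < σ) (hσ1 : σ < 1) (n M : ℕ) (hn : 1 ≤ n) :
    ∑ j ∈ Finset.Icc (n + 1) M, ((j : ℝ)) ^ (-(2 * σ)) ≤
      (n : ℝ) ^ (1 - 2 * σ) / (2 * σ - 1) := by
  have h2σ : (1 : ℝ) < 2 * σ := by linarith
  have hden : (0 : ℝ) < 2 * σ - 1 := by linarith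
  have hRHSnn : 0 ≤ (n : ℝ) ^ (1 - 2 * σ) / (2 * σ - 1) :=
    div_nonneg (Real.rpow_nonneg (by positivity) _) hden.le
  rcases le_or_gt M n with hM | hM
  · rw [Finset.Icc_eq_empty (by omega)]
    simpa using hRHSnn
  have hnM : n ≤ M := hM.le
  have hf : AntitoneOn (fun x : ℝ => x ^ (-(2 * σ))) (Set.Icc (n : ℝ) M) := by
    intro x hx y hy hxy
    exact Real.rpow_le_rpow_of_nonpos (lt_of_lt_of_le (by exact_mod_cast hn) hx.1) hxy
      (by linarith)
  have key := AntitoneOn.sum_le_integral_Ico hnM hf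
  have hsum_eq : ∑ j ∈ Finset.Icc (n + 1) M, ((j : ℝ)) ^ (-(2 * σ)) =
      ∑ i ∈ Finset.Ico n M, ((i + 1 : ℕ) : ℝ) ^ (-(2 * σ)) := by
    rw [← Finset.Ico_add_one_right_eq_Icc]
    rw [show Finset.Ico (n + 1) (M + 1) = (Finset.Ico n M).map (addRightEmbedding 1) by
      rw [Finset.map_add_right_Ico]]
    rw [Finset.sum_map]
    rfl
  have hint : ∫ x in (n : ℝ)..(M : ℝ), x ^ (-(2 * σ)) =
      ((M : ℝ) ^ (-(2 * σ) + 1) - (n : ℝ) ^ (-(2 * σ) + 1)) / (-(2 * σ) + 1) := by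
    apply integral_rpow
    right
    constructor
    · intro h; linarith
    · intro h
      rw [Set.mem_uIcc] at h
      have h1 : (1 : ℝ) ≤ (n : ℝ) := by exact_mod_cast hn
      have h2 : (n : ℝ) ≤ (M : ℝ) := by exact_mod_cast hnM
      rcases h with ⟨h3, _⟩ | ⟨_, h4⟩ <;> linarith
  rw [hsum_eq]
  refine le_trans key ?_
  rw [hint]
  have hMnn : (0:ℝ) ≤ (M : ℝ) ^ (-(2 * σ) + 1) := Real.rpow_nonneg (by positivity) _
  have heq2 : ((M : ℝ) ^ (-(2 * σ) + 1) - (n : ℝ) ^ (-(2 * σ) + 1)) / (-(2 * σ) + 1)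
      = ((n : ℝ) ^ (-(2 * σ) + 1) - (M : ℝ) ^ (-(2 * σ) + 1)) / (2 * σ - 1) := by
    generalize (M : ℝ) ^ (-(2 * σ) + 1) = X
    generalize (n : ℝ) ^ (-(2 * σ) + 1) = Y
    rw [div_eq_div_iff (by linarith) hden.ne']
    ring
  rw [heq2, show (1 - 2 * σ : ℝ) = -(2 * σ) + 1 by ring]
  rw [div_le_div_iff₀ hden hden]
  nlinarith [Real.rpow_nonneg (show (0:ℝ) ≤ (n:ℝ) by positivity) (-(2 * σ) + 1)]


lemma prod_moment {Ω : Type*} [MeasurableSpace Ω] (μ : Measure Ω) [IsProbabilityMeasure μ]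
    (ξ : ℤ → Ω → ℝ) (hmeas : ∀ l, Measurable (ξ l))
    (hindep : iIndepFun ξ μ)
    (hint1 : ∀ i : ℤ, Integrable (ξ i) μ)
    (hint2 : ∀ i : ℤ, Integrable (fun ω => ξ i ω ^ 2) μ)
    (e : ℤ → ℕ) (he : ∀ i, e i = 1 ∨ e i = 2) (s : Finset ℤ) :
    Integrable (fun ω => ∏ i ∈ s, ξ i ω ^ e i) μ ∧
      ∫ ω, ∏ i ∈ s, ξ i ω ^ e i ∂μ = ∏ i ∈ s, ∫ ω, ξ i ω ^ e i ∂μ := by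
  classical
  have hη : iIndepFun (fun i ω => ξ i ω ^ e i) μ :=
    hindep.comp (fun i x => x ^ e i) (fun i => measurable_id.pow_const _)
  have hηmeas : ∀ i, Measurable (fun ω => ξ i ω ^ e i) := fun i => (hmeas i).pow_const _
  have hηint : ∀ i, Integrable (fun ω => ξ i ω ^ e i) μ := by
    intro i
    rcases he i with h | h <;> rw [h]
    · simpa using hint1 i
    · exact hint2 i
  induction s using Finset.induction with
  | empty => simp
  | insert a s hi ih =>
    have hIndep : IndepFun (fun ω => ∏ j ∈ s, ξ j ω ^ e j) (fun ω => ξ a ω ^ e a) μ := by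
      have h := hη.indepFun_finsetProd_of_notMem hηmeas hi
      have : (∏ j ∈ s, fun ω => ξ j ω ^ e j) = fun ω => ∏ j ∈ s, ξ j ω ^ e j := by
        funext ω; simp [Finset.prod_apply]
      rwa [this] at h
    have hmul : (fun ω => ∏ i ∈ insert a s, ξ i ω ^ e i)
        = (fun ω => ∏ j ∈ s, ξ j ω ^ e j) * (fun ω => ξ a ω ^ e a) := by
      funext ω
      simp only [Finset.prod_insert hi, Pi.mul_apply]
      ring
    constructor
    · rw [hmul]
      exact hIndep.integrable_mul ih.1 (hηint a)
    · rw [Finset.prod_insert hi, hmul,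
        hIndep.integral_mul_eq_mul_integral ih.1.aestronglyMeasurable (hηint a).aestronglyMeasurable, ih.2]
      ring

/-- Fourth-moment orthogonality for products `ξ_l ξ_m ξ_{l'} ξ_{m'}`. -/
lemma four_moment {Ω : Type*} [MeasurableSpace Ω] (μ : Measure Ω) [IsProbabilityMeasure μ]
    (ξ : ℤ → Ω → ℝ) (hmeas : ∀ l, Measurable (ξ l))
    (hindep : iIndepFun ξ μ)
    (hint1 : ∀ i : ℤ, Integrable (ξ i) μ)
    (hint2 : ∀ i : ℤ, Integrable (fun ω => ξ i ω ^ 2) μ)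
    (hm1 : ∀ i : ℤ, ∫ ω, ξ i ω ∂μ = 0)
    (hm2 : ∀ i : ℤ, ∫ ω, ξ i ω ^ 2 ∂μ = 1)
    (l m l' m' : ℤ) (h1 : l ≠ m) (h2 : l' ≠ m') :
    Integrable (fun ω => ξ l ω * ξ m ω * (ξ l' ω * ξ m' ω)) μ ∧
      ∫ ω, ξ l ω * ξ m ω * (ξ l' ω * ξ m' ω) ∂μ =
        if (l' = l ∧ m' = m) ∨ (l' = m ∧ m' = l) then 1 else 0 := by
  classical
  have main := fun e he s => prod_moment μ ξ hmeas hindep hint1 hint2 e he s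
  by_cases hll : l' = l
  · subst hll
    by_cases hmm : m' = m
    · subst hmm
      -- ξ_l² ξ_m²
      have key := main (fun _ => 2) (fun _ => Or.inr rfl) {l', m'}
      have heq : (fun ω => ξ l' ω * ξ m' ω * (ξ l' ω * ξ m' ω))
          = fun ω => ∏ i ∈ ({l', m'} : Finset ℤ), ξ i ω ^ 2 := by
        funext ω
        rw [Finset.prod_insert (by simpa using h2), Finset.prod_singleton]
        ring
      rw [if_pos (Or.inl ⟨rfl, rfl⟩), heq]
      refine ⟨key.1, ?_⟩
      rw [key.2, Finset.prod_insert (by simpa using h2), Finset.prod_singleton, hm2, hm2]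
      norm_num
    · -- ξ_l² ξ_m ξ_{m'},  m' ∉ {l', m}
      have hml : m ≠ l' := h1.symm
      have hm'l : m' ≠ l' := fun h => h2 h.symm
      set e : ℤ → ℕ := fun i => if i = l' then 2 else 1 with he_def
      have key := main e (fun i => by by_cases h : i = l' <;> simp [he_def, h]) {l', m, m'}
      have hmem1 : l' ∉ ({m, m'} : Finset ℤ) := by simp only [Finset.mem_insert, Finset.mem_singleton, not_or]; omega
      have hmem2 : m ∉ ({m'} : Finset ℤ) := by simp only [Finset.mem_singleton]; omega
      have heq : (fun ω => ξ l' ω * ξ m ω * (ξ l' ω * ξ m' ω))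
          = fun ω => ∏ i ∈ ({l', m, m'} : Finset ℤ), ξ i ω ^ e i := by
        funext ω
        rw [Finset.prod_insert hmem1, Finset.prod_insert hmem2, Finset.prod_singleton]
        simp only [he_def, if_pos rfl, if_neg hml, if_neg hm'l]
        ring
      rw [if_neg (by omega), heq]
      refine ⟨key.1, ?_⟩
      rw [key.2, Finset.prod_insert hmem1, Finset.prod_insert hmem2, Finset.prod_singleton]
      simp only [he_def, if_pos rfl, if_neg hml, if_neg hm'l, pow_one]
      rw [hm1 m]
      ring
  · by_cases hlm : l' = m
    · subst hlm
      by_cases hml : m' = l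
      · subst hml
        -- ξ_l ξ_m ξ_m ξ_l = ξ_l² ξ_m²
        have key := main (fun _ => 2) (fun _ => Or.inr rfl) {m', l'}
        have heq : (fun ω => ξ m' ω * ξ l' ω * (ξ l' ω * ξ m' ω))
            = fun ω => ∏ i ∈ ({m', l'} : Finset ℤ), ξ i ω ^ 2 := by
          funext ω
          rw [Finset.prod_insert (by simpa using h1), Finset.prod_singleton]
          ring
        rw [if_pos (Or.inr ⟨rfl, rfl⟩), heq]
        refine ⟨key.1, ?_⟩
        rw [key.2, Finset.prod_insert (by simpa using h1), Finset.prod_singleton, hm2, hm2]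
        norm_num
      · -- ξ_l ξ_m² ξ_{m'}
        have hm'm : m' ≠ l' := fun h => h2 h.symm
        have hlm' : l ≠ m' := fun h => hml h.symm
        set e : ℤ → ℕ := fun i => if i = l' then 2 else 1 with he_def
        have key := main e (fun i => by by_cases h : i = l' <;> simp [he_def, h]) {l, l', m'}
        have hmem1 : l ∉ ({l', m'} : Finset ℤ) := by simp only [Finset.mem_insert, Finset.mem_singleton, not_or]; omega
        have hmem2 : l' ∉ ({m'} : Finset ℤ) := by simp only [Finset.mem_singleton]; omega
        have heq : (fun ω => ξ l ω * ξ l' ω * (ξ l' ω * ξ m' ω))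
            = fun ω => ∏ i ∈ ({l, l', m'} : Finset ℤ), ξ i ω ^ e i := by
          funext ω
          rw [Finset.prod_insert hmem1, Finset.prod_insert hmem2, Finset.prod_singleton]
          simp only [he_def, if_pos rfl, if_neg h1, if_neg hm'm]
          ring
        rw [if_neg (by rintro (⟨h, -⟩ | ⟨-, h⟩); exacts [h1 h.symm, hml h]), heq]
        refine ⟨key.1, ?_⟩
        rw [key.2, Finset.prod_insert hmem1, Finset.prod_insert hmem2, Finset.prod_singleton]
        simp only [he_def, if_pos rfl, if_neg h1, if_neg hm'm, pow_one]
        rw [hm1 l]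
        ring
    · -- l' ∉ {l, m}
      by_cases hm'l : m' = l
      · subst hm'l
        -- ξ_l² ξ_m ξ_{l'}
        have hmm' : m ≠ m' := Ne.symm h1
        set e : ℤ → ℕ := fun i => if i = m' then 2 else 1 with he_def
        have key := main e (fun i => by by_cases h : i = m' <;> simp [he_def, h]) {m', m, l'}
        have hmem1 : m' ∉ ({m, l'} : Finset ℤ) := by simp only [Finset.mem_insert, Finset.mem_singleton, not_or]; omega
        have hmem2 : m ∉ ({l'} : Finset ℤ) := by simp only [Finset.mem_singleton]; omega
        have heq : (fun ω => ξ m' ω * ξ m ω * (ξ l' ω * ξ m' ω))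
            = fun ω => ∏ i ∈ ({m', m, l'} : Finset ℤ), ξ i ω ^ e i := by
          funext ω
          rw [Finset.prod_insert hmem1, Finset.prod_insert hmem2, Finset.prod_singleton]
          simp only [he_def, if_pos rfl, if_neg hmm', if_neg h2]
          ring
        rw [if_neg (by rintro (⟨h, -⟩ | ⟨h, -⟩); exacts [hll h, hlm h]), heq]
        refine ⟨key.1, ?_⟩
        rw [key.2, Finset.prod_insert hmem1, Finset.prod_insert hmem2, Finset.prod_singleton]
        simp only [he_def, if_pos rfl, if_neg hmm', if_neg h2, pow_one]
        rw [hm1 m]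
        ring
      · by_cases hm'm : m' = m
        · subst hm'm
          -- ξ_l ξ_m² ξ_{l'}
          have hlm'2 : l ≠ m' := h1
          set e : ℤ → ℕ := fun i => if i = m' then 2 else 1 with he_def
          have key := main e (fun i => by by_cases h : i = m' <;> simp [he_def, h]) {l, m', l'}
          have hmem1 : l ∉ ({m', l'} : Finset ℤ) := by simp only [Finset.mem_insert, Finset.mem_singleton, not_or]; omega
          have hmem2 : m' ∉ ({l'} : Finset ℤ) := by simp only [Finset.mem_singleton]; omega
          have heq : (fun ω => ξ l ω * ξ m' ω * (ξ l' ω * ξ m' ω))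
              = fun ω => ∏ i ∈ ({l, m', l'} : Finset ℤ), ξ i ω ^ e i := by
            funext ω
            rw [Finset.prod_insert hmem1, Finset.prod_insert hmem2, Finset.prod_singleton]
            simp only [he_def, if_pos rfl, if_neg h1, if_neg h2]
            ring
          rw [if_neg (by rintro (⟨h, -⟩ | ⟨h, -⟩); exacts [hll h, hlm h]), heq]
          refine ⟨key.1, ?_⟩
          rw [key.2, Finset.prod_insert hmem1, Finset.prod_insert hmem2, Finset.prod_singleton]
          simp only [he_def, if_pos rfl, if_neg h1, if_neg h2, pow_one]
          rw [hm1 l]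
          ring
        · -- all four distinct
          set e : ℤ → ℕ := fun _ => 1 with he_def
          have key := main e (fun _ => Or.inl rfl) {l, m, l', m'}
          have hmem1 : l ∉ ({m, l', m'} : Finset ℤ) := by simp only [Finset.mem_insert, Finset.mem_singleton, not_or]; omega
          have hmem2 : m ∉ ({l', m'} : Finset ℤ) := by simp only [Finset.mem_insert, Finset.mem_singleton, not_or]; omega
          have hmem3 : l' ∉ ({m'} : Finset ℤ) := by simp only [Finset.mem_singleton]; omega
          have heq : (fun ω => ξ l ω * ξ m ω * (ξ l' ω * ξ m' ω))
              = fun ω => ∏ i ∈ ({l, m, l', m'} : Finset ℤ), ξ i ω ^ e i := by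
            funext ω
            rw [Finset.prod_insert hmem1, Finset.prod_insert hmem2, Finset.prod_insert hmem3,
              Finset.prod_singleton]
            simp only [he_def, pow_one]
            ring
          rw [if_neg (by rintro (⟨h, -⟩ | ⟨h, -⟩); exacts [hll h, hlm h]), heq]
          refine ⟨key.1, ?_⟩
          rw [key.2, Finset.prod_insert hmem1, Finset.prod_insert hmem2,
            Finset.prod_insert hmem3, Finset.prod_singleton]
          simp only [he_def, pow_one]
          rw [hm1 l]
          ring
/-- **Second-moment bound for the 'small coefficient' off-diagonal partial sums
`S_n^{(3)}`** (Step 7 of Theorem `longonly`, with `T = n`).  `{ξ_l}` are i.i.d.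
with mean `0` and variance `1`; `c_0 = 1`, `c_l = |l|^{-σ}` for `l ≠ 0`,
`σ ∈ (1/2, 1)`.  `S_n^{(3)} = Σ_{k=1}^n Σ_{l≠m, l,m > k+T} c_{k-l} c_{k-m} ξ_l ξ_m`
is realized as the a.s. limit of its truncations.  Then there is a constant
`C = C(σ)` with `E[(S_n^{(3)})²] ≤ C n² T^{2-4σ} = C n^{4-4σ}` for all `n ≥ 1`. -/
theorem small_coefficient_offdiagonal_second_moment_bound
    {Ω : Type*} [MeasurableSpace Ω] (μ : Measure Ω) [IsProbabilityMeasure μ]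
    (ξ : ℤ → Ω → ℝ)
    (hmeas : ∀ l, Measurable (ξ l))
    (hindep : iIndepFun ξ μ)
    (hident : ∀ l : ℤ, IdentDistrib (ξ l) (ξ 1) μ μ)
    (hmean : ∫ ω, ξ 1 ω ∂μ = 0)
    (hvar : ∫ ω, (ξ 1 ω) ^ 2 ∂μ = 1)
    (σ : ℝ) (hσ : σ ∈ Set.Ioo (1 / 2 : ℝ) 1)
    (c : ℤ → ℝ) (hc0 : c 0 = 1) (hcl : ∀ l : ℤ, l ≠ 0 → c l = |(l : ℝ)| ^ (-σ))
    (S : ℕ → Ω → ℝ)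
    (hS : ∀ n : ℕ, ∀ᵐ ω ∂μ,
      Tendsto
        (fun R : ℕ =>
          ∑ k ∈ Finset.Icc (1 : ℤ) (n : ℤ),
            ∑ l ∈ Finset.Icc (k + (n : ℤ) + 1) (R : ℤ),
              ∑ m ∈ Finset.Icc (k + (n : ℤ) + 1) (R : ℤ),
                if l ≠ m then c (k - l) * c (k - m) * ξ l ω * ξ m ω else 0)
        atTop (𝓝 (S n ω))) :
    ∃ C : ℝ, ∀ n : ℕ, 1 ≤ n →
      ∫ ω, (S n ω) ^ 2 ∂μ ≤ C * (n : ℝ) ^ (4 - 4 * σ) := by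
  classical
  obtain ⟨hσ1, hσ2⟩ := hσ
  have hden : (0:ℝ) < 2 * σ - 1 := by linarith
  -- basic integrability and moments
  have hint2_1 : Integrable (fun ω => ξ 1 ω ^ 2) μ := by
    by_contra h
    rw [integral_undef h] at hvar
    exact one_ne_zero hvar.symm
  have hint1_1 : Integrable (ξ 1) μ := by
    refine Integrable.mono (hint2_1.add (integrable_const 1))
      (hmeas 1).aestronglyMeasurable ?_
    filter_upwards with ω
    simp only [Real.norm_eq_abs, Pi.add_apply]
    rw [abs_of_nonneg (by positivity : (0:ℝ) ≤ ξ 1 ω ^ 2 + 1)]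
    nlinarith [sq_abs (ξ 1 ω), sq_nonneg (|ξ 1 ω| - 1), abs_nonneg (ξ 1 ω)]
  have hint1 : ∀ i : ℤ, Integrable (ξ i) μ := fun i =>
    ((hident i).integrable_iff).mpr hint1_1
  have hsq : ∀ i : ℤ, IdentDistrib (fun ω => ξ i ω ^ 2) (fun ω => ξ 1 ω ^ 2) μ μ :=
    fun i => (hident i).comp (measurable_id.pow_const 2)
  have hint2 : ∀ i : ℤ, Integrable (fun ω => ξ i ω ^ 2) μ := fun i =>
    ((hsq i).integrable_iff).mpr hint2_1
  have hm1 : ∀ i : ℤ, ∫ ω, ξ i ω ∂μ = 0 := fun i => by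
    rw [(hident i).integral_eq]; exact hmean
  have hm2 : ∀ i : ℤ, ∫ ω, ξ i ω ^ 2 ∂μ = 1 := fun i => by
    rw [(hsq i).integral_eq]; exact hvar
  refine ⟨2 / (2 * σ - 1) ^ 2, fun n hn => ?_⟩
  have hn1 : (1:ℝ) ≤ (n:ℝ) := by exact_mod_cast hn
  -- notation
  set K : Finset ℤ := Finset.Icc (1 : ℤ) (n : ℤ) with hK
  set u : ℤ → ℤ → ℝ := fun k l => if k + (n:ℤ) + 1 ≤ l then c (k - l) else 0 with hu
  set w : ℤ × ℤ → ℝ := fun p => ∑ k ∈ K, u k p.1 * u k p.2 with hw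
  set I : ℕ → Finset ℤ := fun R => Finset.Icc ((n:ℤ) + 2) (R:ℤ) with hI
  set P : ℕ → Finset (ℤ×ℤ) := fun R => ((I R) ×ˢ (I R)).filter (fun p => p.1 ≠ p.2) with hP
  set g : ℕ → Ω → ℝ := fun R ω => ∑ p ∈ P R, w p * (ξ p.1 ω * ξ p.2 ω) with hg
  set bound : ℝ := 2 / (2 * σ - 1) ^ 2 * (n : ℝ) ^ (4 - 4 * σ) with hbound
  have hboundnn : 0 ≤ bound := by
    apply mul_nonneg (by positivity) (Real.rpow_nonneg (by positivity) _)
  -- Step A : identification of the truncations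
  have hgeq : ∀ (R : ℕ) (ω : Ω),
      (∑ k ∈ Finset.Icc (1 : ℤ) (n : ℤ),
        ∑ l ∈ Finset.Icc (k + (n : ℤ) + 1) (R : ℤ),
          ∑ m ∈ Finset.Icc (k + (n : ℤ) + 1) (R : ℤ),
            if l ≠ m then c (k - l) * c (k - m) * ξ l ω * ξ m ω else 0) = g R ω := by
    intro R ω
    have step1 : ∀ k ∈ Finset.Icc (1 : ℤ) (n : ℤ),
        (∑ l ∈ Finset.Icc (k + (n : ℤ) + 1) (R : ℤ),
          ∑ m ∈ Finset.Icc (k + (n : ℤ) + 1) (R : ℤ),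
            if l ≠ m then c (k - l) * c (k - m) * ξ l ω * ξ m ω else 0)
        = ∑ l ∈ I R, ∑ m ∈ I R,
            if l ≠ m then (u k l * u k m) * (ξ l ω * ξ m ω) else 0 := by
      intro k hk
      obtain ⟨hk1, hk2⟩ := Finset.mem_Icc.mp hk
      have hfil : Finset.Icc (k + (n:ℤ) + 1) (R:ℤ)
          = (I R).filter (fun l => k + (n:ℤ) + 1 ≤ l) := by
        rw [hI]
        ext x
        simp only [Finset.mem_Icc, Finset.mem_filter]
        omega
      rw [hfil]
      simp only [Finset.sum_filter]
      refine Finset.sum_congr rfl fun l _ => ?_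
      by_cases hcl : k + (n:ℤ) + 1 ≤ l
      · rw [if_pos hcl]
        refine Finset.sum_congr rfl fun m _ => ?_
        by_cases hcm : k + (n:ℤ) + 1 ≤ m
        · rw [if_pos hcm]
          by_cases hlm : l ≠ m
          · rw [if_pos hlm, if_pos hlm, hu]
            simp only [if_pos hcl, if_pos hcm]
            ring
          · rw [if_neg hlm, if_neg hlm]
        · rw [if_neg hcm]
          have : u k m = 0 := by rw [hu]; exact if_neg hcm
          simp [this]
      · rw [if_neg hcl]
        have : u k l = 0 := by rw [hu]; exact if_neg hcl
        simp [this]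
    rw [Finset.sum_congr rfl step1, hg, hP]
    dsimp only
    rw [Finset.sum_filter, Finset.sum_product, Finset.sum_comm]
    refine Finset.sum_congr rfl fun l _ => ?_
    rw [Finset.sum_comm]
    refine Finset.sum_congr rfl fun m _ => ?_
    by_cases hlm : l ≠ m
    · simp only [if_pos hlm, hw, Finset.sum_mul, hK]
    · simp only [if_neg hlm, Finset.sum_const_zero]
  -- Step B : second moment identity/bound for the truncations
  have hPmem : ∀ (R : ℕ) (p : ℤ × ℤ), p ∈ P R → p.1 ≠ p.2 := by
    intro R p hp
    rw [hP] at hp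
    exact (Finset.mem_filter.mp hp).2
  have hquad := fun (p q : ℤ × ℤ) (hp : p.1 ≠ p.2) (hq : q.1 ≠ q.2) =>
    four_moment μ ξ hmeas hindep hint1 hint2 hm1 hm2 p.1 p.2 q.1 q.2 hp hq
  have hgsq : ∀ R : ℕ, (fun ω => (g R ω) ^ 2)
      = fun ω => ∑ p ∈ P R, ∑ q ∈ P R,
          (w p * w q) * (ξ p.1 ω * ξ p.2 ω * (ξ q.1 ω * ξ q.2 ω)) := by
    intro R
    funext ω
    rw [hg]
    dsimp only
    rw [sq, Finset.sum_mul_sum]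
    exact Finset.sum_congr rfl fun p _ => Finset.sum_congr rfl fun q _ => by ring
  have hgint : ∀ R : ℕ, Integrable (fun ω => (g R ω) ^ 2) μ := by
    intro R
    rw [hgsq R]
    exact integrable_finset_sum _ fun p hp => integrable_finset_sum _ fun q hq =>
      ((hquad p q (hPmem R p hp) (hPmem R q hq)).1.const_mul _)
  have hEg2 : ∀ R : ℕ, ∫ ω, (g R ω) ^ 2 ∂μ
      = ∑ p ∈ P R, ∑ q ∈ P R, (w p * w q) *
          (if (q.1 = p.1 ∧ q.2 = p.2) ∨ (q.1 = p.2 ∧ q.2 = p.1) then 1 else 0) := by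
    intro R
    rw [hgsq R, integral_finset_sum _ (fun p hp => integrable_finset_sum _ fun q hq =>
      ((hquad p q (hPmem R p hp) (hPmem R q hq)).1.const_mul _))]
    refine Finset.sum_congr rfl fun p hp => ?_
    rw [integral_finset_sum _ (fun q hq =>
      ((hquad p q (hPmem R p hp) (hPmem R q hq)).1.const_mul _))]
    refine Finset.sum_congr rfl fun q hq => ?_
    rw [integral_const_mul, (hquad p q (hPmem R p hp) (hPmem R q hq)).2]
  have hswap_mem : ∀ (R : ℕ) (p : ℤ × ℤ), p ∈ P R → (p.2, p.1) ∈ P R := by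
    intro R p hp
    rw [hP] at hp ⊢
    rw [Finset.mem_filter, Finset.mem_product] at hp ⊢
    exact ⟨⟨hp.1.2, hp.1.1⟩, fun h => hp.2 (by simpa using h.symm)⟩
  have hwswap : ∀ p : ℤ × ℤ, w (p.2, p.1) = w p := by
    intro p
    rw [hw]
    exact Finset.sum_congr rfl fun k _ => mul_comm _ _
  have hg2sum : ∀ R : ℕ, ∫ ω, (g R ω) ^ 2 ∂μ = 2 * ∑ p ∈ P R, w p ^ 2 := by
    intro R
    rw [hEg2 R, Finset.mul_sum]
    refine Finset.sum_congr rfl fun p hp => ?_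
    have hp12 : p.1 ≠ p.2 := hPmem R p hp
    have hpswap : p ≠ (p.2, p.1) := by
      intro h
      exact hp12 (by rw [Prod.ext_iff] at h; exact h.1)
    have hsplit : ∀ q ∈ P R, (w p * w q) *
        (if (q.1 = p.1 ∧ q.2 = p.2) ∨ (q.1 = p.2 ∧ q.2 = p.1) then 1 else 0)
        = (if q = p then w p * w q else 0) + (if q = (p.2, p.1) then w p * w q else 0) := by
      intro q _
      have hc1 : (q = p) ↔ (q.1 = p.1 ∧ q.2 = p.2) := Prod.ext_iff
      have hc2 : (q = (p.2, p.1)) ↔ (q.1 = p.2 ∧ q.2 = p.1) := Prod.ext_iff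
      by_cases h1 : q = p
      · have h2 : ¬(q = (p.2, p.1)) := fun h => hpswap (h1 ▸ h)
        rw [if_pos h1, if_neg h2, if_pos (Or.inl (hc1.mp h1))]
        ring
      · by_cases h2 : q = (p.2, p.1)
        · rw [if_neg h1, if_pos h2, if_pos (Or.inr (hc2.mp h2))]
          ring
        · rw [if_neg h1, if_neg h2, if_neg ?_]
          · ring
          · rintro (h | h)
            exacts [h1 (hc1.mpr h), h2 (hc2.mpr h)]
    rw [Finset.sum_congr rfl hsplit, Finset.sum_add_distrib,
      Finset.sum_ite_eq' (P R) p (fun q => w p * w q),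
      Finset.sum_ite_eq' (P R) (p.2, p.1) (fun q => w p * w q),
      if_pos hp, if_pos (hswap_mem R p hp), hwswap p]
    ring
  -- Step C-E : coefficient bound
  set tailB : ℝ := (n : ℝ) ^ (1 - 2 * σ) / (2 * σ - 1) with htailB
  have htailBnn : 0 ≤ tailB := div_nonneg (Real.rpow_nonneg (by positivity) _) hden.le
  have hB : ∀ k ∈ K, ∀ R : ℕ, (∑ l ∈ I R, (u k l) ^ 2) ≤ tailB := by
    intro k hk R
    rw [hK] at hk
    obtain ⟨hk1, hk2⟩ := Finset.mem_Icc.mp hk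
    have hfil : Finset.Icc (k + (n:ℤ) + 1) (R:ℤ)
        = (I R).filter (fun l => k + (n:ℤ) + 1 ≤ l) := by
      rw [hI]
      ext x
      simp only [Finset.mem_Icc, Finset.mem_filter]
      omega
    have hstep : (∑ l ∈ I R, (u k l) ^ 2)
        = ∑ l ∈ Finset.Icc (k + (n:ℤ) + 1) (R:ℤ), c (k - l) ^ 2 := by
      rw [hfil, Finset.sum_filter]
      refine Finset.sum_congr rfl fun l _ => ?_
      rw [hu]
      dsimp only
      by_cases hcl : k + (n:ℤ) + 1 ≤ l
      · rw [if_pos hcl, if_pos hcl]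
      · rw [if_neg hcl, if_neg hcl]
        norm_num
    rw [hstep]
    have hmap : (∑ l ∈ Finset.Icc (k + (n:ℤ) + 1) (R:ℤ), c (k - l) ^ 2)
        = ∑ j ∈ Finset.Icc (n + 1) ((R:ℤ) - k).toNat, ((j:ℝ)) ^ (-(2 * σ)) := by
      refine Finset.sum_nbij' (i := fun l => (l - k).toNat) (j := fun j => k + (j : ℤ))
        ?_ ?_ ?_ ?_ ?_
      · intro l hl
        simp only [Finset.mem_Icc] at hl ⊢
        omega
      · intro j hj
        simp only [Finset.mem_Icc] at hj ⊢
        omega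
      · intro l hl
        simp only [Finset.mem_Icc] at hl
        omega
      · intro j hj
        simp only [Finset.mem_Icc] at hj
        omega
      · intro l hl
        simp only [Finset.mem_Icc] at hl
        have hlk : (0:ℤ) < l - k := by omega
        have hkl0 : k - l ≠ 0 := by omega
        have hcast : (((l - k).toNat : ℕ) : ℝ) = ((l - k : ℤ) : ℝ) := by
          exact_mod_cast congrArg (fun z : ℤ => (z : ℝ)) (Int.toNat_of_nonneg hlk.le)
        have hxpos : (0:ℝ) < ((l - k : ℤ) : ℝ) := by exact_mod_cast hlk
        rw [hcl _ hkl0]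
        have habs : |((k - l : ℤ) : ℝ)| = ((l - k : ℤ) : ℝ) := by
          rw [abs_of_nonpos (by exact_mod_cast (by omega : (k - l : ℤ) ≤ 0))]
          push_cast
          ring
        rw [habs, hcast, sq, ← Real.rpow_add hxpos]
        congr 1
        ring
    rw [hmap]
    exact tail_sum_bound σ hσ1 hσ2 n _ hn
  have hcoef : ∀ R : ℕ, (∑ p ∈ P R, w p ^ 2) ≤ (n : ℝ) ^ 2 * tailB ^ 2 := by
    intro R
    have h1 : (∑ p ∈ P R, w p ^ 2) ≤ ∑ p ∈ (I R) ×ˢ (I R), w p ^ 2 := by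
      refine Finset.sum_le_sum_of_subset_of_nonneg ?_ (fun _ _ _ => sq_nonneg _)
      rw [hP]
      exact Finset.filter_subset _ _
    have h2 : (∑ p ∈ (I R) ×ˢ (I R), w p ^ 2)
        = ∑ t ∈ K ×ˢ K, (∑ l ∈ I R, u t.1 l * u t.2 l) * (∑ m ∈ I R, u t.1 m * u t.2 m) := by
      calc (∑ p ∈ (I R) ×ˢ (I R), w p ^ 2)
          = ∑ p ∈ (I R) ×ˢ (I R), ∑ t ∈ K ×ˢ K,
              (u t.1 p.1 * u t.2 p.1) * (u t.1 p.2 * u t.2 p.2) := by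
            refine Finset.sum_congr rfl fun p _ => ?_
            rw [hw]
            dsimp only
            rw [sq, Finset.sum_mul_sum, ← Finset.sum_product']
            exact Finset.sum_congr rfl fun t _ => by ring
        _ = ∑ t ∈ K ×ˢ K, ∑ p ∈ (I R) ×ˢ (I R),
              (u t.1 p.1 * u t.2 p.1) * (u t.1 p.2 * u t.2 p.2) := Finset.sum_comm
        _ = ∑ t ∈ K ×ˢ K, (∑ l ∈ I R, u t.1 l * u t.2 l) * (∑ m ∈ I R, u t.1 m * u t.2 m) := by
            refine Finset.sum_congr rfl fun t _ => ?_
            rw [Finset.sum_mul_sum, ← Finset.sum_product']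
    have h3 : ∀ t ∈ K ×ˢ K, (∑ l ∈ I R, u t.1 l * u t.2 l) * (∑ m ∈ I R, u t.1 m * u t.2 m)
        ≤ tailB ^ 2 := by
      intro t ht
      rw [Finset.mem_product] at ht
      have hcs : ((∑ l ∈ I R, u t.1 l * u t.2 l)) ^ 2
          ≤ (∑ l ∈ I R, u t.1 l ^ 2) * (∑ l ∈ I R, u t.2 l ^ 2) :=
        Finset.sum_mul_sq_le_sq_mul_sq _ _ _
      have hb1 := hB t.1 ht.1 R
      have hb2 := hB t.2 ht.2 R
      have hnn2 : 0 ≤ ∑ l ∈ I R, u t.2 l ^ 2 := Finset.sum_nonneg fun _ _ => sq_nonneg _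
      calc (∑ l ∈ I R, u t.1 l * u t.2 l) * (∑ m ∈ I R, u t.1 m * u t.2 m)
          = (∑ l ∈ I R, u t.1 l * u t.2 l) ^ 2 := (sq _).symm
        _ ≤ (∑ l ∈ I R, u t.1 l ^ 2) * (∑ l ∈ I R, u t.2 l ^ 2) := hcs
        _ ≤ tailB * tailB := mul_le_mul hb1 hb2 hnn2 htailBnn
        _ = tailB ^ 2 := (sq tailB).symm
    have hKcard : K.card = n := by
      rw [hK, Int.card_Icc]
      omega
    calc (∑ p ∈ P R, w p ^ 2) ≤ ∑ p ∈ (I R) ×ˢ (I R), w p ^ 2 := h1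
      _ = ∑ t ∈ K ×ˢ K, (∑ l ∈ I R, u t.1 l * u t.2 l) * (∑ m ∈ I R, u t.1 m * u t.2 m) := h2
      _ ≤ ∑ _t ∈ K ×ˢ K, tailB ^ 2 := Finset.sum_le_sum h3
      _ = (n : ℝ) ^ 2 * tailB ^ 2 := by
          rw [Finset.sum_const, Finset.card_product, hKcard, nsmul_eq_mul]
          push_cast
          ring
  have hgbound : ∀ R : ℕ, ∫ ω, (g R ω) ^ 2 ∂μ ≤ bound := by
    intro R
    rw [hg2sum R]
    have h1 : 2 * ∑ p ∈ P R, w p ^ 2 ≤ 2 * ((n : ℝ) ^ 2 * tailB ^ 2) := by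
      have := hcoef R
      linarith
    refine h1.trans (le_of_eq ?_)
    have hnpos : (0:ℝ) < (n:ℝ) := by positivity
    have hpow : ((n:ℝ) ^ (1 - 2*σ)) ^ (2:ℕ) = (n:ℝ) ^ ((1-2*σ) * 2) := by
      rw [← Real.rpow_natCast ((n:ℝ) ^ (1 - 2*σ)) 2, ← Real.rpow_mul hnpos.le]
      norm_num
    have hpow2 : ((n:ℝ)) ^ (2:ℕ) = (n:ℝ) ^ ((2:ℝ)) := by
      rw [← Real.rpow_natCast (n:ℝ) 2]; norm_num
    have hcomb : (n:ℝ) ^ ((2:ℝ)) * (n:ℝ) ^ ((1-2*σ)*2) = (n:ℝ) ^ (4 - 4*σ) := by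
      rw [← Real.rpow_add hnpos]; congr 1; ring
    rw [hbound, htailB, div_pow, hpow, hpow2]
    calc 2 * ((n:ℝ) ^ ((2:ℝ)) * ((n:ℝ) ^ ((1-2*σ)*2) / (2*σ-1)^2))
        = 2/(2*σ-1)^2 * ((n:ℝ) ^ ((2:ℝ)) * (n:ℝ) ^ ((1-2*σ)*2)) := by ring
      _ = 2/(2*σ-1)^2 * (n:ℝ) ^ (4-4*σ) := by rw [hcomb]
  -- Step F : Fatou
  have hgmeas : ∀ R : ℕ, Measurable (g R) := by
    intro R
    rw [hg]
    exact Finset.measurable_sum _ fun p _ =>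
      (measurable_const.mul ((hmeas p.1).mul (hmeas p.2)))
  have htend : ∀ᵐ ω ∂μ, Tendsto (fun R => g R ω) atTop (𝓝 (S n ω)) := by
    filter_upwards [hS n] with ω hω
    have : (fun R : ℕ =>
        ∑ k ∈ Finset.Icc (1 : ℤ) (n : ℤ),
          ∑ l ∈ Finset.Icc (k + (n : ℤ) + 1) (R : ℤ),
            ∑ m ∈ Finset.Icc (k + (n : ℤ) + 1) (R : ℤ),
              if l ≠ m then c (k - l) * c (k - m) * ξ l ω * ξ m ω else 0)
        = fun R => g R ω := funext fun R => hgeq R ω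
    rwa [this] at hω
  have hSmeas : AEMeasurable (S n) μ :=
    aemeasurable_of_tendsto_metrizable_ae atTop (fun R => (hgmeas R).aemeasurable) htend
  have hlin : ∫⁻ ω, ENNReal.ofReal ((S n ω) ^ 2) ∂μ ≤ ENNReal.ofReal bound := by
    have hlim : ∀ᵐ ω ∂μ, ENNReal.ofReal ((S n ω) ^ 2)
        = Filter.liminf (fun R => ENNReal.ofReal ((g R ω) ^ 2)) atTop := by
      filter_upwards [htend] with ω hω
      have h1 : Tendsto (fun R => ENNReal.ofReal ((g R ω) ^ 2)) atTop
          (𝓝 (ENNReal.ofReal ((S n ω) ^ 2))) :=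
        (ENNReal.continuous_ofReal.tendsto _).comp (hω.pow 2)
      exact h1.liminf_eq.symm
    calc ∫⁻ ω, ENNReal.ofReal ((S n ω) ^ 2) ∂μ
        = ∫⁻ ω, Filter.liminf (fun R => ENNReal.ofReal ((g R ω) ^ 2)) atTop ∂μ :=
          lintegral_congr_ae hlim
      _ ≤ Filter.liminf (fun R => ∫⁻ ω, ENNReal.ofReal ((g R ω) ^ 2) ∂μ) atTop :=
          lintegral_liminf_le fun R => ((hgmeas R).pow_const 2).ennreal_ofReal
      _ ≤ ENNReal.ofReal bound := by
          have hub : ∀ R : ℕ, (∫⁻ ω, ENNReal.ofReal ((g R ω) ^ 2) ∂μ)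
              ≤ ENNReal.ofReal bound := by
            intro R
            rw [← ofReal_integral_eq_lintegral_ofReal (hgint R)
              (Filter.Eventually.of_forall fun ω => sq_nonneg _)]
            exact ENNReal.ofReal_le_ofReal (hgbound R)
          calc Filter.liminf (fun R => ∫⁻ ω, ENNReal.ofReal ((g R ω) ^ 2) ∂μ) atTop
              ≤ Filter.liminf (fun _ => ENNReal.ofReal bound) atTop :=
                Filter.liminf_le_liminf (Filter.Eventually.of_forall hub)
            _ = ENNReal.ofReal bound := Filter.liminf_const _
  have hfinal : ∫ ω, (S n ω) ^ 2 ∂μ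
      = (∫⁻ ω, ENNReal.ofReal ((S n ω) ^ 2) ∂μ).toReal := by
    exact integral_eq_lintegral_of_nonneg_ae (Filter.Eventually.of_forall fun ω => sq_nonneg _)
      ((hSmeas.pow_const 2).aestronglyMeasurable)
  rw [hfinal]
  calc (∫⁻ ω, ENNReal.ofReal ((S n ω) ^ 2) ∂μ).toReal
      ≤ (ENNReal.ofReal bound).toReal := ENNReal.toReal_mono ENNReal.ofReal_ne_top hlin
    _ = bound := ENNReal.toReal_ofReal hboundnn
end
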